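/- Consider the Kalman-filter update step on an estimated support. Let $A_T \in \mathbb{R}^{n \times k_1}$ and $A_\Delta \in \mathbb{R}^{n \times k_2}$ be real matrices, $P$ a symmetric positive definite $k_1 \times k_1$ matrix, $\sigma > 0$, and set $M = A_T^\top A_T + \sigma^2 P^{-1}$ and $K = M^{-1} A_T^\top$. Suppose the observation is $y = A_T x_T + A_\Delta x_\Delta + w$ for vectors $x_T \in \mathbb{R}^{k_1}$, $x_\Delta \in \mathbb{R}^{k_2}$, $w \in \mathbb{R}^n$, and the updated estimate is $\hat{x}_T = (I - K A_T)\hat{x}_T^{prev} + K y$ for some $\hat{x}_T^{prev} \in \mathbb{R}^{k_1}$. Then the residual signal $\beta_T := x_T - \hat{x}_T$ satisfies $\beta_T = M^{-1}\big( \sigma^2 P^{-1}(x_T - \hat{x}_T^{prev}) - A_T^\top A_\Delta x_\Delta - A_T^\top w \big)$, and consequently $\|\beta_T\|_2 \le \|M^{-1}\|_2 \big( \sigma^2 \|P^{-1}\|_2 \|x_T - \hat{x}_T^{prev}\|_2 + \|A_T^\top A_\Delta\|_2 \|x_\Delta\|_2 + \|A_T^\top w\|_2 \big)$. -/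

import Mathlib

open Matrix

/-- Spectral norm (induced 2-norm) of a real matrix. -/
noncomputable def matSpectralNorm {m n : ℕ} (A : Matrix (Fin m) (Fin n) ℝ) : ℝ :=
  ‖LinearMap.toContinuousLinearMap (Matrix.toEuclideanLin A)‖

/-- Matrix–vector multiplication, with the result regarded as an element of
Euclidean space (so that `‖·‖` is the Euclidean norm). -/
def mulVecE {m n : ℕ} (A : Matrix (Fin m) (Fin n) ℝ) (v : EuclideanSpace ℝ (Fin n)) :
    EuclideanSpace ℝ (Fin m) :=
  WithLp.toLp 2 (A.mulVec v)

lemma mulVecE_add {m n : ℕ} (A : Matrix (Fin m) (Fin n) ℝ) (u v : EuclideanSpace ℝ (Fin n)) :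
    mulVecE A (u + v) = mulVecE A u + mulVecE A v := by
  simp [mulVecE, Matrix.mulVec_add]

lemma mulVecE_sub {m n : ℕ} (A : Matrix (Fin m) (Fin n) ℝ) (u v : EuclideanSpace ℝ (Fin n)) :
    mulVecE A (u - v) = mulVecE A u - mulVecE A v := by
  simp [mulVecE, Matrix.mulVec_sub]

lemma mulVecE_mul {m n p : ℕ} (A : Matrix (Fin m) (Fin n) ℝ) (B : Matrix (Fin n) (Fin p) ℝ)
    (v : EuclideanSpace ℝ (Fin p)) : mulVecE (A * B) v = mulVecE A (mulVecE B v) :=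
  by simp [mulVecE, Matrix.mulVec_mulVec]

lemma mulVecE_smul {m n : ℕ} (a : ℝ) (A : Matrix (Fin m) (Fin n) ℝ)
    (v : EuclideanSpace ℝ (Fin n)) : mulVecE (a • A) v = a • mulVecE A v :=
  by simp [mulVecE, Matrix.smul_mulVec]

lemma mulVecE_vsmul {m n : ℕ} (A : Matrix (Fin m) (Fin n) ℝ) (a : ℝ)
    (v : EuclideanSpace ℝ (Fin n)) : mulVecE A (a • v) = a • mulVecE A v :=
  by simp [mulVecE, Matrix.mulVec_smul]

lemma mulVecE_one {n : ℕ} (v : EuclideanSpace ℝ (Fin n)) :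
    mulVecE (1 : Matrix (Fin n) (Fin n) ℝ) v = v := by
  simp [mulVecE]

lemma mulVecE_addMat {m n : ℕ} (A B : Matrix (Fin m) (Fin n) ℝ) (v : EuclideanSpace ℝ (Fin n)) :
    mulVecE (A + B) v = mulVecE A v + mulVecE B v := by
  simp [mulVecE, Matrix.add_mulVec]

lemma mulVecE_subMat {m n : ℕ} (A B : Matrix (Fin m) (Fin n) ℝ) (v : EuclideanSpace ℝ (Fin n)) :
    mulVecE (A - B) v = mulVecE A v - mulVecE B v := by
  simp [mulVecE, Matrix.sub_mulVec]

lemma norm_mulVecE_le {m n : ℕ} (A : Matrix (Fin m) (Fin n) ℝ) (v : EuclideanSpace ℝ (Fin n)) :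
    ‖mulVecE A v‖ ≤ matSpectralNorm A * ‖v‖ :=
  (LinearMap.toContinuousLinearMap (Matrix.toEuclideanLin A)).le_opNorm v

lemma matSpectralNorm_nonneg {m n : ℕ} (A : Matrix (Fin m) (Fin n) ℝ) :
    0 ≤ matSpectralNorm A := norm_nonneg _

/-- Kalman update residual on the estimated support. With
`M = A_Tᵀ A_T + σ² P⁻¹`, `K = M⁻¹ A_Tᵀ`, observation `y = A_T x_T + A_Δ x_Δ + w`,
and update `x̂_T = (I - K A_T) x̂_Tᵖʳᵉᵛ + K y`, the residual `β_T = x_T - x̂_T`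
satisfies the stated identity and norm bound. -/
theorem kf_residual_identity_and_bound {n k₁ k₂ : ℕ}
    (A_T : Matrix (Fin n) (Fin k₁) ℝ) (A_Δ : Matrix (Fin n) (Fin k₂) ℝ)
    (P : Matrix (Fin k₁) (Fin k₁) ℝ) (hP : P.PosDef) (σ : ℝ) (hσ : 0 < σ)
    (M : Matrix (Fin k₁) (Fin k₁) ℝ) (hM : M = A_Tᵀ * A_T + σ ^ 2 • P⁻¹)
    (K : Matrix (Fin k₁) (Fin n) ℝ) (hK : K = M⁻¹ * A_Tᵀ)
    (x_T xhatPrev : EuclideanSpace ℝ (Fin k₁)) (x_Δ : EuclideanSpace ℝ (Fin k₂))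
    (w y : EuclideanSpace ℝ (Fin n))
    (hy : y = mulVecE A_T x_T + mulVecE A_Δ x_Δ + w)
    (xhat_T : EuclideanSpace ℝ (Fin k₁))
    (hxhat : xhat_T = mulVecE ((1 : Matrix (Fin k₁) (Fin k₁) ℝ) - K * A_T) xhatPrev +
      mulVecE K y)
    (β_T : EuclideanSpace ℝ (Fin k₁)) (hβ : β_T = x_T - xhat_T) :
    β_T = mulVecE M⁻¹ (σ ^ 2 • mulVecE P⁻¹ (x_T - xhatPrev) -
        mulVecE (A_Tᵀ * A_Δ) x_Δ - mulVecE A_Tᵀ w) ∧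
    ‖β_T‖ ≤ matSpectralNorm M⁻¹ *
      (σ ^ 2 * matSpectralNorm P⁻¹ * ‖x_T - xhatPrev‖ +
        matSpectralNorm (A_Tᵀ * A_Δ) * ‖x_Δ‖ + ‖mulVecE A_Tᵀ w‖) := by
  -- M is positive definite, hence invertible
  have hpsd : (A_Tᵀ * A_T).PosSemidef := by
    have h := Matrix.posSemidef_conjTranspose_mul_self (A_T : Matrix (Fin n) (Fin k₁) ℝ)
    simpa using h
  have hMpd : M.PosDef := by
    rw [hM]
    refine ⟨hpsd.1.add ?_, fun x hx => ?_⟩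
    · show (σ ^ 2 • P⁻¹)ᴴ = σ ^ 2 • P⁻¹
      rw [Matrix.conjTranspose_smul, hP.inv.1]
      simp
    · exact (Matrix.PosDef.posSemidef_add hpsd (hP.inv.smul (pow_pos hσ 2 : (0:ℝ) < σ ^ 2))).2 hx
  have hMinv : M⁻¹ * M = 1 :=
    Matrix.nonsing_inv_mul M ((Matrix.isUnit_iff_isUnit_det M).1 hMpd.isUnit)
  subst hK hy hxhat hβ
  -- matrix identity : 1 - M⁻¹AᵀA = M⁻¹ (σ² P⁻¹)
  have hmat : σ ^ 2 • (M⁻¹ * P⁻¹) + M⁻¹ * A_Tᵀ * A_T = 1 := by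
    rw [← Matrix.mul_smul, Matrix.mul_assoc, ← Matrix.mul_add, add_comm, ← hM, hMinv]
  have hvec' : ∀ v : EuclideanSpace ℝ (Fin k₁),
      v - mulVecE (M⁻¹ * A_Tᵀ * A_T) v = σ ^ 2 • mulVecE (M⁻¹ * P⁻¹) v := by
    intro v
    have h := congrArg (fun C => mulVecE C v) hmat
    simp only [mulVecE_addMat, mulVecE_one, mulVecE_smul] at h
    exact sub_eq_of_eq_add h.symm
  have hid : x_T - (mulVecE ((1 : Matrix (Fin k₁) (Fin k₁) ℝ) - M⁻¹ * A_Tᵀ * A_T) xhatPrev +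
      mulVecE (M⁻¹ * A_Tᵀ) (mulVecE A_T x_T + mulVecE A_Δ x_Δ + w)) =
      mulVecE M⁻¹ (σ ^ 2 • mulVecE P⁻¹ (x_T - xhatPrev) -
        mulVecE (A_Tᵀ * A_Δ) x_Δ - mulVecE A_Tᵀ w) := by
    have e1 : mulVecE (M⁻¹ * A_Tᵀ) (mulVecE A_T x_T + mulVecE A_Δ x_Δ + w) =
        mulVecE (M⁻¹ * A_Tᵀ * A_T) x_T + mulVecE (M⁻¹ * (A_Tᵀ * A_Δ)) x_Δ +
          mulVecE (M⁻¹ * A_Tᵀ) w := by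
      simp only [mulVecE_add, ← mulVecE_mul, Matrix.mul_assoc]
    have e2 : mulVecE ((1 : Matrix (Fin k₁) (Fin k₁) ℝ) - M⁻¹ * A_Tᵀ * A_T) xhatPrev =
        xhatPrev - mulVecE (M⁻¹ * A_Tᵀ * A_T) xhatPrev := by
      rw [mulVecE_subMat, mulVecE_one]
    have e3 : mulVecE M⁻¹ (σ ^ 2 • mulVecE P⁻¹ (x_T - xhatPrev) -
          mulVecE (A_Tᵀ * A_Δ) x_Δ - mulVecE A_Tᵀ w) =
        σ ^ 2 • mulVecE (M⁻¹ * P⁻¹) x_T - σ ^ 2 • mulVecE (M⁻¹ * P⁻¹) xhatPrev -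
          mulVecE (M⁻¹ * (A_Tᵀ * A_Δ)) x_Δ - mulVecE (M⁻¹ * A_Tᵀ) w := by
      simp only [mulVecE_sub, mulVecE_vsmul, ← mulVecE_mul, smul_sub]
    rw [e1, e2, e3]
    calc x_T - ((xhatPrev - mulVecE (M⁻¹ * A_Tᵀ * A_T) xhatPrev) +
          (mulVecE (M⁻¹ * A_Tᵀ * A_T) x_T + mulVecE (M⁻¹ * (A_Tᵀ * A_Δ)) x_Δ +
            mulVecE (M⁻¹ * A_Tᵀ) w))
        = (x_T - mulVecE (M⁻¹ * A_Tᵀ * A_T) x_T) -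
            (xhatPrev - mulVecE (M⁻¹ * A_Tᵀ * A_T) xhatPrev) -
            mulVecE (M⁻¹ * (A_Tᵀ * A_Δ)) x_Δ - mulVecE (M⁻¹ * A_Tᵀ) w := by abel
      _ = σ ^ 2 • mulVecE (M⁻¹ * P⁻¹) x_T - σ ^ 2 • mulVecE (M⁻¹ * P⁻¹) xhatPrev -
            mulVecE (M⁻¹ * (A_Tᵀ * A_Δ)) x_Δ - mulVecE (M⁻¹ * A_Tᵀ) w := by
          rw [hvec' x_T, hvec' xhatPrev]
  refine ⟨hid, ?_⟩
  rw [hid]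
  have hS : ‖σ ^ 2 • mulVecE P⁻¹ (x_T - xhatPrev) -
      mulVecE (A_Tᵀ * A_Δ) x_Δ - mulVecE A_Tᵀ w‖ ≤
      σ ^ 2 * matSpectralNorm P⁻¹ * ‖x_T - xhatPrev‖ +
        matSpectralNorm (A_Tᵀ * A_Δ) * ‖x_Δ‖ + ‖mulVecE A_Tᵀ w‖ := by
    have t1 : ‖σ ^ 2 • mulVecE P⁻¹ (x_T - xhatPrev)‖ ≤
        σ ^ 2 * matSpectralNorm P⁻¹ * ‖x_T - xhatPrev‖ := by
      rw [norm_smul, Real.norm_eq_abs, abs_of_nonneg (sq_nonneg σ), mul_assoc]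
      exact mul_le_mul_of_nonneg_left (norm_mulVecE_le _ _) (sq_nonneg σ)
    have t2 : ‖mulVecE (A_Tᵀ * A_Δ) x_Δ‖ ≤ matSpectralNorm (A_Tᵀ * A_Δ) * ‖x_Δ‖ :=
      norm_mulVecE_le _ _
    calc ‖σ ^ 2 • mulVecE P⁻¹ (x_T - xhatPrev) -
          mulVecE (A_Tᵀ * A_Δ) x_Δ - mulVecE A_Tᵀ w‖
        ≤ ‖σ ^ 2 • mulVecE P⁻¹ (x_T - xhatPrev) - mulVecE (A_Tᵀ * A_Δ) x_Δ‖ +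
          ‖mulVecE A_Tᵀ w‖ := norm_sub_le _ _
      _ ≤ (‖σ ^ 2 • mulVecE P⁻¹ (x_T - xhatPrev)‖ + ‖mulVecE (A_Tᵀ * A_Δ) x_Δ‖) +
          ‖mulVecE A_Tᵀ w‖ := by gcongr; exact norm_sub_le _ _
      _ ≤ _ := by linarith
  calc ‖mulVecE M⁻¹ (σ ^ 2 • mulVecE P⁻¹ (x_T - xhatPrev) -
        mulVecE (A_Tᵀ * A_Δ) x_Δ - mulVecE A_Tᵀ w)‖
      ≤ matSpectralNorm M⁻¹ * ‖σ ^ 2 • mulVecE P⁻¹ (x_T - xhatPrev) -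
        mulVecE (A_Tᵀ * A_Δ) x_Δ - mulVecE A_Tᵀ w‖ := norm_mulVecE_le _ _
    _ ≤ _ := mul_le_mul_of_nonneg_left hS (matSpectralNorm_nonneg _)
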